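/- Let Z_P = {z_1,...,z_{n_P}} be a finite set of points in R^k, let μ* be its mean (the optimal 1-means centroid), and let φ(Z_P, μ) = Σ_i ||z_i - μ||^2. If S is a uniformly random subset of Z_P of fixed size n_L ≥ 1 and μ is the mean of S, then E[φ(Z_P, μ)] = (1 + (n_P - n_L)/(n_L (n_P - 1))) · φ(Z_P, μ*). -/

import Mathlib

open Finset

lemma count_aux {α : Type*} [DecidableEq α] (s : Finset α) (i : α) (hi : i ∈ s) (n : ℕ)
    (p : Finset α → Prop) [DecidablePred p] :
    ((s.powersetCard (n+1)).filter fun S => i ∈ S ∧ p S).card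
      = (((s.erase i).powersetCard n).filter fun T => p (insert i T)).card := by
  apply Finset.card_bij (fun S _ => S.erase i)
  · intro S hS
    simp only [mem_filter, mem_powersetCard] at hS ⊢
    obtain ⟨⟨hsub, hcard⟩, hiS, hpS⟩ := hS
    refine ⟨⟨erase_subset_erase _ hsub, by rw [card_erase_of_mem hiS, hcard]; rfl⟩, ?_⟩
    rwa [insert_erase hiS]
  · intro S hS T hT h
    simp only [mem_filter] at hS hT
    have := congrArg (insert i) h
    rwa [insert_erase hS.2.1, insert_erase hT.2.1] at this
  · intro T hT
    simp only [mem_filter, mem_powersetCard] at hT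
    obtain ⟨⟨hsub, hcard⟩, hpT⟩ := hT
    have hiT : i ∉ T := fun h => (mem_erase.1 (hsub h)).1 rfl
    refine ⟨insert i T, ?_, ?_⟩
    · simp only [mem_filter, mem_powersetCard]
      refine ⟨⟨insert_subset hi (hsub.trans (erase_subset _ _)), ?_⟩,
        mem_insert_self _ _, hpT⟩
      rw [card_insert_of_notMem hiT, hcard]
    · rw [erase_insert hiT]

lemma count_one {α : Type*} [DecidableEq α] [Fintype α] (i : α) (m : ℕ) :
    (((univ : Finset α).powersetCard (m+1)).filter fun S => i ∈ S).card
      = (Fintype.card α - 1).choose m := by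
  have := count_aux (univ : Finset α) i (mem_univ i) m (fun _ => True)
  simpa [card_powersetCard, card_erase_of_mem, card_univ] using this

lemma count_two {α : Type*} [DecidableEq α] [Fintype α] {i j : α} (hij : i ≠ j) (m : ℕ) :
    (((univ : Finset α).powersetCard (m+1)).filter fun S => i ∈ S ∧ j ∈ S).card
      = (if m = 0 then 0 else (Fintype.card α - 2).choose (m - 1)) := by
  rw [count_aux (univ : Finset α) i (mem_univ i) m (fun S => j ∈ S)]
  have hji : ∀ T : Finset α, (j ∈ insert i T) ↔ j ∈ T := by
    intro T; simp [mem_insert, hij.symm]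
  simp only [hji]
  match m with
  | 0 => rw [powersetCard_zero]; simp [filter_singleton]
  | m'+1 =>
    have hjE : j ∈ (univ : Finset α).erase i := by simp [hij.symm]
    have := count_aux ((univ : Finset α).erase i) j hjE m' (fun _ => True)
    simp only [and_true] at this
    rw [this]
    simp [card_powersetCard, card_erase_of_mem, hjE, card_univ]
    congr 1

lemma coef_id (nP m : ℕ) (hnP : 2 ≤ nP) (hle : m + 1 ≤ nP) :
    ((nP.choose (m+1) : ℝ))⁻¹ *
      ((nP.choose (m+1) : ℝ) + (nP : ℝ) * (((m : ℝ) + 1)⁻¹) ^ 2 *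
        (((nP - 1).choose m : ℝ)
          - ((if m = 0 then 0 else (nP - 2).choose (m - 1) : ℕ) : ℝ)))
    = 1 + ((nP : ℝ) - ((m : ℝ) + 1)) / (((m : ℝ) + 1) * ((nP : ℝ) - 1)) := by
  have hnP0 : (nP : ℝ) ≠ 0 := by positivity
  have hnP1 : (nP : ℝ) - 1 ≠ 0 := by
    have : (2 : ℝ) ≤ (nP : ℝ) := by exact_mod_cast hnP
    linarith
  have hC0 : (nP.choose (m+1) : ℝ) ≠ 0 := by
    have := Nat.choose_pos hle
    positivity
  have ha0 : ((nP - 1).choose m : ℝ) ≠ 0 := by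
    have : 0 < (nP - 1).choose m := Nat.choose_pos (by omega)
    positivity
  have hnat1 : nP * (nP - 1).choose m = nP.choose (m + 1) * (m + 1) := by
    have := Nat.add_one_mul_choose_eq (nP - 1) m
    rwa [Nat.sub_add_cancel (by omega : 1 ≤ nP)] at this
  have hr1 : (nP : ℝ) * ((nP - 1).choose m : ℝ)
      = (nP.choose (m + 1) : ℝ) * ((m : ℝ) + 1) := by
    exact_mod_cast congrArg (Nat.cast (R := ℝ)) hnat1
  match m with
  | 0 =>
    simp only [if_pos rfl, Nat.choose_zero_right, Nat.choose_one_right]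
    rw [Nat.choose_one_right]
    norm_num
    rw [div_self hnP1]
    field_simp
  | m' + 1 =>
    simp only [if_neg (Nat.succ_ne_zero m'), Nat.add_sub_cancel] at *
    have hnat2 : (nP - 1) * (nP - 2).choose m' = (nP - 1).choose (m' + 1) * (m' + 1) := by
      have := Nat.add_one_mul_choose_eq (nP - 2) m'
      rwa [show nP - 2 + 1 = nP - 1 by omega] at this
    have hr2 : ((nP : ℝ) - 1) * ((nP - 2).choose m' : ℝ)
        = ((nP - 1).choose (m' + 1) : ℝ) * ((m' : ℝ) + 1) := by
      have := congrArg (Nat.cast (R := ℝ)) hnat2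
      push_cast at this
      rwa [Nat.cast_sub (by omega : 1 ≤ nP), Nat.cast_one] at *
      -- fallback handled below if needed
    set L : ℝ := (m' : ℝ) + 1 + 1 with hL
    have hL0 : L ≠ 0 := by positivity
    set A : ℝ := ((nP - 1).choose (m' + 1) : ℝ) with hA
    set Bv : ℝ := ((nP - 2).choose m' : ℝ) with hBv
    set C : ℝ := (nP.choose (m' + 1 + 1) : ℝ) with hC
    have e1 : Bv = A * (L - 1) / ((nP : ℝ) - 1) := by
      rw [eq_div_iff hnP1]
      have : A * (L - 1) = A * ((m' : ℝ) + 1) := by rw [hL]; ring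
      rw [this]
      linarith [hr2]
    have e2 : C = (nP : ℝ) * A / L := by
      rw [eq_div_iff hL0]
      have : (nP : ℝ) * A = C * L := by
        have hcast : ((m' : ℝ) + 1 + 1) = ((m' + 1 : ℕ) : ℝ) + 1 := by push_cast; ring
        rw [hL]
        calc (nP : ℝ) * A = C * (((m' + 1 : ℕ) : ℝ) + 1) := by
              exact_mod_cast hr1
          _ = C * ((m' : ℝ) + 1 + 1) := by push_cast; ring
      linarith [this]
    rw [e1, e2]
    have hApos : A ≠ 0 := by rwa [hA]
    field_simp
    rw [hL]; push_cast; ring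

/-- The k-means potential of a set of points w.r.t. a single center. -/
noncomputable def kmeansPot {k nP : ℕ} (z : Fin nP → EuclideanSpace ℝ (Fin k))
    (μ : EuclideanSpace ℝ (Fin k)) : ℝ :=
  ∑ i, ‖z i - μ‖ ^ 2

theorem expected_potential_subsample_mean {k nP nL : ℕ}
    (hnP : 2 ≤ nP) (hnL : 1 ≤ nL) (hle : nL ≤ nP)
    (z : Fin nP → EuclideanSpace ℝ (Fin k))
    (μstar : EuclideanSpace ℝ (Fin k))
    (hμstar : μstar = ((nP : ℝ)⁻¹) • ∑ i, z i) :
    ((nP.choose nL : ℝ))⁻¹ *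
        ∑ S ∈ (Finset.univ : Finset (Fin nP)).powersetCard nL,
          kmeansPot z (((nL : ℝ)⁻¹) • ∑ i ∈ S, z i)
      = (1 + ((nP : ℝ) - nL) / ((nL : ℝ) * ((nP : ℝ) - 1))) * kmeansPot z μstar := by
  classical
  obtain ⟨m, rfl⟩ : ∃ m, nL = m + 1 := ⟨nL - 1, (Nat.succ_pred_eq_of_pos hnL).symm⟩
  have hnP0 : (nP : ℝ) ≠ 0 := by positivity
  have hnL0 : ((m : ℝ) + 1) ≠ 0 := by positivity
  have hcastL : ((m + 1 : ℕ) : ℝ) = (m : ℝ) + 1 := by push_cast; ring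
  set w : Fin nP → EuclideanSpace ℝ (Fin k) := fun i => z i - μstar with hwdef
  have hw : ∑ i, w i = 0 := by
    simp only [hwdef]
    rw [Finset.sum_sub_distrib, Finset.sum_const, Finset.card_univ, Fintype.card_fin,
      hμstar, ← Nat.cast_smul_eq_nsmul ℝ, smul_smul, mul_inv_cancel₀ hnP0, one_smul, sub_self]
  set φ0 : ℝ := ∑ i, ‖w i‖ ^ 2 with hφ0
  have key : ∀ v : EuclideanSpace ℝ (Fin k),
      ∑ i, ‖w i - v‖ ^ 2 = φ0 + (nP : ℝ) * ‖v‖ ^ 2 := by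
    intro v
    have h : ∀ i, ‖w i - v‖ ^ 2
        = ‖w i‖ ^ 2 - 2 * (inner ℝ (w i) v : ℝ) + ‖v‖ ^ 2 := fun i => norm_sub_sq_real _ _
    simp_rw [h]
    rw [Finset.sum_add_distrib, Finset.sum_sub_distrib, ← Finset.mul_sum, ← sum_inner, hw,
      inner_zero_left, Finset.sum_const, Finset.card_univ, Fintype.card_fin, nsmul_eq_mul]
    ring
  have hpotstar : kmeansPot z μstar = φ0 := by
    simp only [kmeansPot, hφ0, hwdef]
  set P := (Finset.univ : Finset (Fin nP)).powersetCard (m + 1) with hP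
  have hpot : ∀ S ∈ P, kmeansPot z ((((m + 1 : ℕ) : ℝ))⁻¹ • ∑ i ∈ S, z i)
      = φ0 + (nP : ℝ) * ((((m : ℝ) + 1)⁻¹) ^ 2) * ‖∑ i ∈ S, w i‖ ^ 2 := by
    intro S hS
    have hcard : S.card = m + 1 := (Finset.mem_powersetCard.1 hS).2
    have hmu : (((m + 1 : ℕ) : ℝ))⁻¹ • ∑ i ∈ S, z i - μstar
        = (((m + 1 : ℕ) : ℝ))⁻¹ • ∑ i ∈ S, w i := by
      simp only [hwdef]
      rw [Finset.sum_sub_distrib, smul_sub, Finset.sum_const, hcard,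
        ← Nat.cast_smul_eq_nsmul ℝ, smul_smul, inv_mul_cancel₀ (by rw [hcastL]; exact hnL0),
        one_smul]
    have hz : ∀ i, z i - ((((m + 1 : ℕ) : ℝ))⁻¹ • ∑ i ∈ S, z i)
        = w i - ((((m + 1 : ℕ) : ℝ))⁻¹ • ∑ i ∈ S, z i - μstar) := by
      intro i; simp only [hwdef]; abel
    unfold kmeansPot
    simp_rw [hz, hmu]
    rw [key, norm_smul, mul_pow]
    simp only [norm_inv, Real.norm_eq_abs]
    rw [abs_of_pos (by rw [hcastL]; positivity), hcastL]
    ring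
  set g : Fin nP → Fin nP → ℝ := fun i j => (inner ℝ (w i) (w j) : ℝ) with hg
  have h1 : ∀ (f : Fin nP → ℝ) (S : Finset (Fin nP)),
      ∑ i ∈ S, f i = ∑ i, if i ∈ S then f i else 0 := by
    intro f S
    rw [Finset.sum_ite_mem, Finset.univ_inter]
  have hsum : ∑ S ∈ P, ‖∑ i ∈ S, w i‖ ^ 2
      = ((((nP - 1).choose m : ℕ) : ℝ)
          - ((if m = 0 then 0 else (nP - 2).choose (m - 1) : ℕ) : ℝ)) * φ0 := by
    have e1 : ∀ S ∈ P, ‖∑ i ∈ S, w i‖ ^ 2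
        = ∑ i, ∑ j, (if i ∈ S ∧ j ∈ S then g i j else 0) := by
      intro S _
      rw [← real_inner_self_eq_norm_sq, sum_inner]
      simp_rw [inner_sum]
      rw [h1 (fun i => ∑ j ∈ S, g i j) S]
      refine Finset.sum_congr rfl fun i _ => ?_
      by_cases hi : i ∈ S
      · simp only [hi, if_true, true_and]
        exact h1 _ S
      · simp [hi]
    calc ∑ S ∈ P, ‖∑ i ∈ S, w i‖ ^ 2
        = ∑ S ∈ P, ∑ i, ∑ j, (if i ∈ S ∧ j ∈ S then g i j else 0) :=
          Finset.sum_congr rfl e1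
      _ = ∑ i, ∑ j, ∑ S ∈ P, (if i ∈ S ∧ j ∈ S then g i j else 0) := by
          rw [Finset.sum_comm]
          exact Finset.sum_congr rfl fun i _ => Finset.sum_comm
      _ = ∑ i, ∑ j, ((P.filter fun S => i ∈ S ∧ j ∈ S).card : ℝ) * g i j := by
          refine Finset.sum_congr rfl fun i _ => Finset.sum_congr rfl fun j _ => ?_
          rw [← Finset.sum_filter, Finset.sum_const, nsmul_eq_mul]
      _ = ∑ i, (∑ j ∈ univ \ {i},
            ((P.filter fun S => i ∈ S ∧ j ∈ S).card : ℝ) * g i j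
            + ((P.filter fun S => i ∈ S ∧ i ∈ S).card : ℝ) * g i i) := by
          refine Finset.sum_congr rfl fun i _ => ?_
          exact Finset.sum_eq_sum_sdiff_singleton_add (mem_univ i) _
      _ = ∑ i, (∑ j ∈ univ \ {i},
            (((if m = 0 then 0 else (nP - 2).choose (m - 1) : ℕ) : ℝ)) * g i j
            + (((nP - 1).choose m : ℕ) : ℝ) * g i i) := by
          refine Finset.sum_congr rfl fun i _ => ?_
          congr 1
          · refine Finset.sum_congr rfl fun j hj => ?_
            have hij : i ≠ j := by intro h; simp [h] at hj
            congr 2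
            rw [hP, count_two hij m, Fintype.card_fin]
          · have hfe : (P.filter fun S => i ∈ S ∧ i ∈ S) = P.filter fun S => i ∈ S := by
              apply Finset.filter_congr
              intro S _; simp
            rw [hfe, hP, count_one i m, Fintype.card_fin]
      _ = (((if m = 0 then 0 else (nP - 2).choose (m - 1) : ℕ) : ℝ))
            * (∑ i, ∑ j ∈ univ \ {i}, g i j)
          + (((nP - 1).choose m : ℕ) : ℝ) * φ0 := by
          rw [Finset.sum_add_distrib]
          congr 1
          · rw [Finset.mul_sum]
            exact Finset.sum_congr rfl fun i _ => (Finset.mul_sum _ _ _).symm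
          · rw [hφ0, Finset.mul_sum]
            refine Finset.sum_congr rfl fun i _ => ?_
            simp only [hg]
            rw [real_inner_self_eq_norm_sq]
      _ = ((((nP - 1).choose m : ℕ) : ℝ)
            - ((if m = 0 then 0 else (nP - 2).choose (m - 1) : ℕ) : ℝ)) * φ0 := by
          have hoff : ∑ i, ∑ j ∈ univ \ {i}, g i j = -φ0 := by
            have htot : ∑ i, ∑ j, g i j = 0 := by
              simp_rw [hg, ← inner_sum]
              rw [← sum_inner, hw, inner_zero_left]
            have hsplit : ∀ i : Fin nP, ∑ j ∈ univ \ {i}, g i j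
                = (∑ j, g i j) - g i i := by
              intro i
              have := Finset.sum_eq_sum_sdiff_singleton_add (mem_univ i) (g i)
              linarith [this]
            simp_rw [hsplit]
            rw [Finset.sum_sub_distrib, htot]
            simp only [hφ0, zero_sub, neg_inj]
            refine Finset.sum_congr rfl fun i _ => ?_
            simp only [hg]
            rw [real_inner_self_eq_norm_sq]
          rw [hoff]; ring
  rw [hpotstar]
  have hS : ∑ S ∈ P, kmeansPot z ((((m + 1 : ℕ) : ℝ))⁻¹ • ∑ i ∈ S, z i)
      = (nP.choose (m + 1) : ℝ) * φ0
        + (nP : ℝ) * ((((m : ℝ) + 1)⁻¹) ^ 2) *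
          (((((nP - 1).choose m : ℕ) : ℝ)
            - ((if m = 0 then 0 else (nP - 2).choose (m - 1) : ℕ) : ℝ)) * φ0) := by
    rw [Finset.sum_congr rfl hpot, Finset.sum_add_distrib, Finset.sum_const,
      nsmul_eq_mul, hP, card_powersetCard, card_univ, Fintype.card_fin,
      ← Finset.mul_sum, hsum]
  rw [hS, hcastL]
  calc ((nP.choose (m + 1) : ℝ))⁻¹ *
        ((nP.choose (m + 1) : ℝ) * φ0
          + (nP : ℝ) * ((((m : ℝ) + 1)⁻¹) ^ 2) *
            (((((nP - 1).choose m : ℕ) : ℝ)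
              - ((if m = 0 then 0 else (nP - 2).choose (m - 1) : ℕ) : ℝ)) * φ0))
      = (((nP.choose (m + 1) : ℝ))⁻¹ *
          ((nP.choose (m + 1) : ℝ) + (nP : ℝ) * (((m : ℝ) + 1)⁻¹) ^ 2 *
            ((((nP - 1).choose m : ℕ) : ℝ)
              - ((if m = 0 then 0 else (nP - 2).choose (m - 1) : ℕ) : ℝ)))) * φ0 := by
        ring
    _ = (1 + ((nP : ℝ) - ((m : ℝ) + 1)) / (((m : ℝ) + 1) * ((nP : ℝ) - 1))) * φ0 := by
        rw [coef_id nP m hnP hle]
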